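/- arXiv:2311.10285 — 3 statements merged into one kernel-verified Lean document; each statement's English description precedes it below -/
import Mathlib

section
/- For any real x > 0 and any ε > 0, the integral (1/2πi) ∫_{ε-i∞}^{ε+i∞} x^s / s^2 ds equals 0 if 0 < x ≤ 1, and equals log x if x > 1. -/
open Complex MeasureTheory Set Filter

noncomputable def perronF (u : ℝ) : ℂ := ((-(min (Real.log u) 0) : ℝ) : ℂ)

lemma perron_integrable_aux {s : ℂ} (hs : 0 < s.re) :
    IntegrableOn (fun v : ℝ => (v : ℂ) * Complex.exp (-(s * v))) (Ioi 0) := by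
  have hb : IntegrableOn (fun v : ℝ => v ^ (1 : ℝ) * Real.exp (-s.re * v ^ (1 : ℝ))) (Ioi 0) :=
    integrableOn_rpow_mul_exp_neg_mul_rpow (by norm_num) (by norm_num) hs
  have hb' : IntegrableOn (fun v : ℝ => v * Real.exp (-s.re * v)) (Ioi 0) := by
    refine hb.congr_fun (fun v hv => ?_) measurableSet_Ioi
    simp only [Real.rpow_one]
  refine (hb'.mono' ?_ ?_)
  · exact (Complex.continuous_ofReal.mul
      (Complex.continuous_exp.comp (by continuity))).aestronglyMeasurable.restrict
  · filter_upwards [ae_restrict_mem measurableSet_Ioi] with v hv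
    have h1 : (-(s * (v : ℂ))).re = -s.re * v := by simp
    rw [norm_mul, Complex.norm_exp, h1, Complex.norm_real,
      Real.norm_eq_abs, abs_of_pos (mem_Ioi.mp hv)]

lemma perron_exp_integral {s : ℂ} (hs : 0 < s.re) :
    ∫ v : ℝ in Ioi 0, (v : ℂ) * Complex.exp (-(s * v)) = 1 / s ^ 2 := by
  have hs0 : s ≠ 0 := fun h => by simp [h] at hs
  set F : ℝ → ℂ := fun v => -((v : ℂ) / s + 1 / s ^ 2) * Complex.exp (-(s * v)) with hF
  have hderiv : ∀ v : ℝ, HasDerivAt F ((v : ℂ) * Complex.exp (-(s * v))) v := by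
    intro v
    have h1 : HasDerivAt (fun z : ℂ => -(z / s + 1 / s ^ 2)) (-(1 / s)) (v : ℂ) := by
      exact (((hasDerivAt_id (v : ℂ)).div_const s).add_const (1 / s ^ 2)).neg
    have h2 : HasDerivAt (fun z : ℂ => Complex.exp (-(s * z)))
        (Complex.exp (-(s * v)) * (-s)) (v : ℂ) := by
      have : HasDerivAt (fun z : ℂ => -(s * z)) (-s) (v : ℂ) := by
        exact (((hasDerivAt_id (v : ℂ)).const_mul s).neg).congr_deriv (by simp)
      exact this.cexp
    have h3 := (h1.mul h2).comp_ofReal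
    convert h3 using 1
    · rfl
    field_simp
    ring
  have htend : Tendsto F atTop (nhds 0) := by
    have hg : Tendsto (fun v : ℝ => ‖s‖⁻¹ * (v ^ (1:ℝ) * Real.exp (-s.re * v))
        + (‖s‖ ^ 2)⁻¹ * Real.exp (-s.re * v)) atTop (nhds 0) := by
      have t1 : Tendsto (fun v : ℝ => v ^ (1:ℝ) * Real.exp (-s.re * v)) atTop (nhds 0) :=
        tendsto_rpow_mul_exp_neg_mul_atTop_nhds_zero 1 s.re hs
      have t2 : Tendsto (fun v : ℝ => Real.exp (-s.re * v)) atTop (nhds 0) := by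
        simpa using tendsto_rpow_mul_exp_neg_mul_atTop_nhds_zero 0 s.re hs
      simpa using (t1.const_mul ‖s‖⁻¹).add
        (t2.const_mul (‖s‖ ^ 2)⁻¹)
    refine squeeze_zero_norm' ?_ hg
    filter_upwards [eventually_ge_atTop (0 : ℝ)] with v hv
    have : ‖F v‖ ≤ (‖(v : ℂ) / s‖ + ‖(1 : ℂ) / s ^ 2‖) * Real.exp (-(s * v)).re := by
      rw [hF]
      simp only [norm_mul, norm_neg]
      rw [Complex.norm_exp]
      exact mul_le_mul_of_nonneg_right (norm_add_le _ _) (Real.exp_pos _).le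
    refine this.trans (le_of_eq ?_)
    have hre : (-(s * (v : ℂ))).re = -s.re * v := by simp
    rw [hre]
    simp only [norm_div, Complex.norm_real, Real.norm_eq_abs, _root_.abs_of_nonneg hv, norm_one,
      norm_pow, Real.rpow_one]
    ring
  have := integral_Ioi_of_hasDerivAt_of_tendsto (f := F)
    (f' := fun v => (v : ℂ) * Complex.exp (-(s * v))) (a := 0)
    (hderiv 0).continuousAt.continuousWithinAt
    (fun v _ => hderiv v) (perron_integrable_aux hs) htend
  rw [this, hF]
  simp

lemma rexp_cpow_aux {v : ℝ} (s : ℂ) :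
    (Real.exp (-v) : ℂ) ^ (s - 1) * Real.exp (-v) = Complex.exp (-(s * v)) := by
  rw [Complex.ofReal_exp]
  nth_rewrite 2 [← cpow_one (Complex.exp _)]
  rw [← cpow_add _ _ (Complex.exp_ne_zero _), sub_add_cancel,
    cpow_def_of_ne_zero (Complex.exp_ne_zero _),
    Complex.log_exp (by norm_num [Real.pi_pos]) (by norm_num [Real.pi_nonneg])]
  congr 1
  push_cast
  ring


lemma perron_image : (fun v : ℝ => Real.exp (-v)) '' (Ioi 0) = Ioo 0 1 := by
  ext y
  constructor
  · rintro ⟨v, hv, rfl⟩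
    exact ⟨Real.exp_pos _, Real.exp_lt_one_iff.mpr (neg_lt_zero.mpr hv)⟩
  · rintro ⟨hy0, hy1⟩
    exact ⟨-Real.log y, by simpa using Real.log_neg hy0 hy1, by
      simp [Real.exp_log hy0]⟩

lemma perron_derivWithin : ∀ v ∈ Ioi (0:ℝ),
    HasDerivWithinAt (fun v : ℝ => Real.exp (-v)) (-Real.exp (-v)) (Ioi 0) v := by
  intro v _
  have := (Real.hasDerivAt_exp (-v)).comp v (hasDerivAt_neg v)
  simpa [mul_comm, Function.comp_def] using this.hasDerivWithinAt

lemma perron_injOn : InjOn (fun v : ℝ => Real.exp (-v)) (Ioi 0) :=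
  (Real.exp_injective.comp neg_injective).injOn

lemma perron_mellin {s : ℂ} (hs : 0 < s.re) :
    MellinConvergent perronF s ∧ mellin perronF s = 1 / s ^ 2 := by
  set g : ℝ → ℂ := fun t => (t : ℂ) ^ (s - 1) • perronF t with hgdef
  have hg0 : ∀ t ∈ Ici (1:ℝ), g t = 0 := by
    intro t ht
    have : min (Real.log t) 0 = 0 := min_eq_right (Real.log_nonneg ht)
    simp [hgdef, perronF, this]
  have key : ∀ v ∈ Ioi (0:ℝ),
      |(-Real.exp (-v))| • g (Real.exp (-v)) = (v : ℂ) * Complex.exp (-(s * v)) := by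
    intro v hv
    have hlog : Real.log (Real.exp (-v)) = -v := Real.log_exp _
    have hmin : min (-v) 0 = -v := min_eq_left (neg_nonpos.mpr (le_of_lt hv))
    have hpf : perronF (Real.exp (-v)) = (v : ℂ) := by
      simp [perronF, hlog, hmin]
    rw [abs_neg, abs_of_pos (Real.exp_pos _)]
    rw [hgdef]
    simp only [hpf, smul_eq_mul, Complex.real_smul, Complex.ofReal_exp]
    rw [← Complex.ofReal_exp]
    calc (Real.exp (-v) : ℂ) * ((Real.exp (-v) : ℂ) ^ (s - 1) * v)
        = ((Real.exp (-v) : ℂ) ^ (s - 1) * (Real.exp (-v) : ℂ)) * v := by ring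
      _ = (v : ℂ) * Complex.exp (-(s * v)) := by rw [rexp_cpow_aux]; ring
  have hIoo : IntegrableOn g (Ioo 0 1) := by
    rw [← perron_image, integrableOn_image_iff_integrableOn_abs_deriv_smul
      measurableSet_Ioi perron_derivWithin perron_injOn]
    exact (perron_integrable_aux hs).congr_fun (fun v hv => (key v hv).symm) measurableSet_Ioi
  have hIci : IntegrableOn g (Ici 1) :=
    (integrableOn_zero).congr_fun (fun t ht => (hg0 t ht).symm) measurableSet_Ici
  have hconv : MellinConvergent perronF s := by
    refine (hIoo.union hIci).mono_set (fun t ht => ?_)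
    rcases le_or_gt 1 t with h | h
    · exact Or.inr h
    · exact Or.inl ⟨ht, h⟩
  refine ⟨hconv, ?_⟩
  rw [mellin, ← hgdef]
  have h1 : ∫ t in Ioi (0:ℝ), g t = ∫ t in Ioo 0 1, g t := by
    refine setIntegral_eq_of_subset_of_ae_diff_eq_zero
      measurableSet_Ioi.nullMeasurableSet Ioo_subset_Ioi_self ?_
    refine Filter.Eventually.of_forall (fun t ht => ?_)
    rcases le_or_gt 1 t with h | h
    · exact hg0 t h
    · exact absurd ⟨ht.1, h⟩ ht.2
  rw [h1, ← perron_image, integral_image_eq_integral_abs_deriv_smul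
    measurableSet_Ioi perron_derivWithin perron_injOn,
    setIntegral_congr_fun measurableSet_Ioi key, perron_exp_integral hs]

/-- For x > 0 and ε > 0, (1/2πi) ∫_{Re s = ε} x^s/s² ds equals 0 if x ≤ 1 and log x if x > 1. -/
theorem stmt_0 (x ε : ℝ) (hx : 0 < x) (hε : 0 < ε) :
    (1 / (2 * Real.pi * Complex.I)) *
      ∫ t : ℝ, (x : ℂ) ^ ((ε : ℂ) + t * Complex.I) / ((ε : ℂ) + t * Complex.I) ^ 2 * Complex.I
    = if x ≤ 1 then 0 else (Real.log x : ℂ) := by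
  have hx' : 0 < x⁻¹ := inv_pos.mpr hx
  have hcont : ContinuousAt perronF x⁻¹ := by
    apply Complex.continuous_ofReal.continuousAt.comp
    exact ((Real.continuousAt_log (ne_of_gt hx')).min continuousAt_const).neg
  have hεre : ∀ y : ℝ, (0:ℝ) < ((ε:ℂ) + y * I).re := by
    intro y; simpa using hε
  have hmc : MellinConvergent perronF (ε : ℂ) := (perron_mellin (by simpa using hε)).1
  have hmval : ∀ y : ℝ, mellin perronF ((ε:ℂ) + y * I) = 1 / ((ε:ℂ) + y * I) ^ 2 :=
    fun y => (perron_mellin (hεre y)).2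
  have hne : ∀ y : ℝ, ((ε:ℂ) + y * I) ≠ 0 := by
    intro y h
    exact hε.ne' (by simpa using congrArg Complex.re h)
  have hVI : Complex.VerticalIntegrable (mellin perronF) ε := by
    rw [Complex.VerticalIntegrable]
    have heq : (fun y : ℝ => mellin perronF ((ε:ℂ) + y * I))
        = fun y : ℝ => 1 / ((ε:ℂ) + (y:ℂ) * I) ^ 2 := by
      funext y; exact hmval y
    rw [heq]
    set c : ℝ := max 1 (ε ^ 2)⁻¹ with hc
    refine (integrable_inv_one_add_sq.const_mul c).mono' ?_ ?_
    · refine (Continuous.inv₀ ?_ (fun y => pow_ne_zero 2 (hne y))).aestronglyMeasurable.congr ?_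
      · continuity
      · exact Filter.Eventually.of_forall (fun y => (one_div _).symm)
    · refine Filter.Eventually.of_forall (fun y => ?_)
      have hnorm : ‖1 / ((ε:ℂ) + y * I) ^ 2‖ = (ε ^ 2 + y ^ 2)⁻¹ := by
        rw [norm_div, norm_one, norm_pow, one_div, Complex.sq_norm]
        congr 1
        simp [Complex.normSq_apply]
        ring
      rw [hnorm]
      have h2 : (0:ℝ) < 1 + y ^ 2 := by positivity
      have h3 : (0:ℝ) < ε ^ 2 + y ^ 2 := by positivity
      have h1 : (1:ℝ) + y ^ 2 ≤ c * (ε ^ 2 + y ^ 2) := by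
        have ha : (ε ^ 2)⁻¹ * ε ^ 2 = 1 := inv_mul_cancel₀ (pow_ne_zero 2 hε.ne')
        have hb : (1:ℝ) ≤ c := le_max_left _ _
        have hb' : (ε ^ 2)⁻¹ ≤ c := le_max_right _ _
        nlinarith [sq_nonneg y, sq_nonneg ε]
      calc (ε ^ 2 + y ^ 2)⁻¹ = 1 / (ε ^ 2 + y ^ 2) := (one_div _).symm
        _ ≤ c / (1 + y ^ 2) := by
            rw [div_le_div_iff₀ h3 h2]; linarith
        _ = c * (1 + y ^ 2)⁻¹ := by rw [div_eq_mul_inv]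
  have hinv := mellinInv_mellin_eq ε perronF hx' hmc hVI hcont
  rw [mellinInv] at hinv
  have hint : (fun y : ℝ => ((x⁻¹ : ℝ) : ℂ) ^ (-((ε:ℂ) + y * I)) • mellin perronF ((ε:ℂ) + y * I))
      = fun y : ℝ => (x : ℂ) ^ ((ε : ℂ) + y * I) / ((ε : ℂ) + y * I) ^ 2 := by
    funext y
    rw [hmval y, Complex.ofReal_inv,
      inv_cpow _ _ (by rw [Complex.arg_ofReal_of_nonneg hx.le]; exact Real.pi_ne_zero.symm),
      cpow_neg, inv_inv, smul_eq_mul]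
    ring
  rw [hint] at hinv
  have hpf : perronF x⁻¹ = if x ≤ 1 then 0 else (Real.log x : ℂ) := by
    rw [perronF, Real.log_inv]
    split_ifs with h
    · rw [min_eq_right (neg_nonneg.mpr (Real.log_nonpos hx.le h))]
      simp
    · rw [min_eq_left (neg_nonpos.mpr (Real.log_pos (lt_of_not_ge h)).le)]
      simp
  rw [integral_mul_const, ← hpf, ← hinv, Complex.real_smul]
  have hπ : (Real.pi : ℂ) ≠ 0 := Complex.ofReal_ne_zero.mpr Real.pi_ne_zero
  push_cast
  field_simp
end

section
/- Let q ≥ 1 and let χ₀ be the principal Dirichlet character mod q. Then for real x ≥ 2, ∑_{d ≤ x} (d²/φ(d)³) χ₀(d) ≤ (φ(q)/q) · (log x) · ∏_p (1 + (3p² - 3p + 1)/(p⁴ - 3p³ + 3p² - p)) · (1 + o(1)) as x → ∞, where the product is over all primes. -/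
open Finset Filter ArithmeticFunction

noncomputable section Aux16

/-- The prime-local factor. -/
private def w16 (n : ℕ) : ℝ :=
  (3 * (n : ℝ) ^ 2 - 3 * (n : ℝ) + 1) /
    ((n : ℝ) ^ 4 - 3 * (n : ℝ) ^ 3 + 3 * (n : ℝ) ^ 2 - (n : ℝ))

private def Psi16 (b : ℕ) : ℝ := ∏ p ∈ b.primeFactors, w16 p

private def P16 : ℝ := ∏' p : Nat.Primes, (1 + w16 (p : ℕ))

private lemma denom16 (t : ℝ) : t ^ 4 - 3 * t ^ 3 + 3 * t ^ 2 - t = t * (t - 1) ^ 3 := by ring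

private lemma w16_nonneg {p : ℕ} (hp : p.Prime) : 0 ≤ w16 p := by
  have h2 : (2 : ℝ) ≤ p := by exact_mod_cast hp.two_le
  rw [w16, denom16]
  have h3 : (0:ℝ) ≤ (p:ℝ) - 1 := by linarith
  exact div_nonneg (by nlinarith) (mul_nonneg (by linarith) (pow_nonneg h3 3))

private lemma Psi16_nonneg (b : ℕ) : 0 ≤ Psi16 b :=
  Finset.prod_nonneg fun p hp => w16_nonneg (Nat.prime_of_mem_primeFactors hp)

private lemma one_add_mul_w16 {p : ℕ} (hp : p.Prime) :
    (p : ℝ) * w16 p + 1 = ((p : ℝ) / ((p : ℝ) - 1)) ^ 3 := by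
  have h2 : (2 : ℝ) ≤ p := by exact_mod_cast hp.two_le
  have h0 : (p : ℝ) ≠ 0 := by linarith
  have h1 : (p : ℝ) - 1 ≠ 0 := by linarith
  rw [w16, denom16]
  field_simp
  ring

private lemma w16_le {p : ℕ} (hp : p.Prime) : w16 p ≤ 24 * (p : ℝ) ^ (-2 : ℝ) := by
  have h2 : (2 : ℝ) ≤ p := by exact_mod_cast hp.two_le
  have hrp : (p : ℝ) ^ (-2 : ℝ) = ((p : ℝ) ^ 2)⁻¹ := by
    rw [Real.rpow_neg (Nat.cast_nonneg p)]
    congr 1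
    rw [show (2:ℝ) = ((2:ℕ):ℝ) by norm_num, Real.rpow_natCast]
  rw [hrp, w16, denom16]
  have hden : (0 : ℝ) < (p : ℝ) * ((p : ℝ) - 1) ^ 3 := by
    have h3 : (0:ℝ) < (p:ℝ) - 1 := by linarith
    exact mul_pos (by linarith) (pow_pos h3 3)
  have hsq : (0 : ℝ) < (p : ℝ) ^ 2 := by positivity
  rw [div_le_iff₀ hden]
  rw [mul_comm (24 : ℝ) _, inv_mul_eq_div, div_mul_eq_mul_div, le_div_iff₀ hsq]
  nlinarith [mul_nonneg (by linarith : (0:ℝ) ≤ (p:ℝ)) (sq_nonneg ((p:ℝ) - 2)),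
    sq_nonneg ((p:ℝ) - 2)]

private lemma summable16 : Summable (fun p : Nat.Primes => Real.log (1 + w16 (p : ℕ))) := by
  have hs : Summable (fun p : Nat.Primes => 24 * ((p : ℕ) : ℝ) ^ (-2 : ℝ)) :=
    (Nat.Primes.summable_rpow.mpr (by norm_num)).mul_left 24
  refine Summable.of_nonneg_of_le (fun p => Real.log_nonneg (by linarith [w16_nonneg p.2]))
    (fun p => ?_) hs
  have hpos : (0 : ℝ) < 1 + w16 (p : ℕ) := by linarith [w16_nonneg p.2]
  calc Real.log (1 + w16 (p : ℕ)) ≤ (1 + w16 (p : ℕ)) - 1 := Real.log_le_sub_one_of_pos hpos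
    _ = w16 (p : ℕ) := by ring
    _ ≤ 24 * ((p : ℕ) : ℝ) ^ (-2 : ℝ) := w16_le p.2

private lemma hasProd16 :
    HasProd (fun p : Nat.Primes => 1 + w16 (p : ℕ))
      (Real.exp (∑' p : Nat.Primes, Real.log (1 + w16 (p : ℕ)))) := by
  have h := summable16.hasSum.rexp
  have hpos : ∀ p : Nat.Primes, (0 : ℝ) < 1 + w16 (p : ℕ) :=
    fun p => by linarith [w16_nonneg p.2]
  have hfun : (Real.exp ∘ fun p : Nat.Primes => Real.log (1 + w16 (p : ℕ)))
      = fun p : Nat.Primes => 1 + w16 (p : ℕ) := by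
    funext p
    simp [Real.exp_log (hpos p)]
  rwa [hfun] at h

private lemma prod_le_P16 (s : Finset Nat.Primes) :
    ∏ p ∈ s, (1 + w16 (p : ℕ)) ≤ P16 := by
  have h := hasProd16
  have hP : P16 = Real.exp (∑' p : Nat.Primes, Real.log (1 + w16 (p : ℕ))) := h.tprod_eq
  rw [hP]
  refine ge_of_tendsto h ?_
  filter_upwards [Filter.eventually_ge_atTop s] with t hst
  rw [← Finset.prod_sdiff hst]
  have h1 : (1 : ℝ) ≤ ∏ p ∈ t \ s, (1 + w16 (p : ℕ)) := by
    have := Finset.prod_le_prod (f := fun _ : Nat.Primes => (1 : ℝ))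
      (g := fun p : Nat.Primes => 1 + w16 (p : ℕ)) (s := t \ s)
      (fun i _ => by norm_num)
      (fun i _ => by show (1:ℝ) ≤ 1 + w16 (i:ℕ); linarith [w16_nonneg i.2])
    simpa using this
  have h0 : (0 : ℝ) ≤ ∏ p ∈ s, (1 + w16 (p : ℕ)) :=
    Finset.prod_nonneg fun p _ => by linarith [w16_nonneg p.2]
  exact le_mul_of_one_le_left h0 h1

private lemma prod_le_P16' (U : Finset ℕ) (hU : ∀ p ∈ U, p.Prime) :
    ∏ p ∈ U, (1 + w16 p) ≤ P16 := by
  have hemb : Function.Injective (fun x : {x // x ∈ U} => (⟨x.1, hU x.1 x.2⟩ : Nat.Primes)) := by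
    intro a b h
    have h2 : (a : ℕ) = (b : ℕ) := congrArg (fun y : Nat.Primes => (y : ℕ)) h
    exact Subtype.ext h2
  have h1 : ∏ p ∈ U, (1 + w16 p)
      = ∏ p ∈ U.attach.map ⟨_, hemb⟩, (1 + w16 (p : ℕ)) := by
    rw [Finset.prod_map]
    exact (Finset.prod_attach U fun p => 1 + w16 p).symm
  rw [h1]
  exact prod_le_P16 _

/-- Sum over squarefree divisors equals sum over powerset of prime factors. -/
private lemma sum_sqfree_divisors {d : ℕ} (hd : d ≠ 0) (f : ℕ → ℝ) :
    ∑ b ∈ d.divisors.filter Squarefree, f b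
      = ∑ S ∈ d.primeFactors.powerset, f (∏ p ∈ S, p) := by
  rw [Nat.sum_divisors_filter_squarefree hd, Nat.factors_eq]
  refine Finset.sum_congr (by simp [Nat.toFinset_factors]) fun S _ => ?_
  rw [Finset.prod_val]
  rfl

private lemma psi_sum_le (N : ℕ) :
    ∑ b ∈ Icc 1 N, (if Squarefree b then Psi16 b else 0) ≤ P16 := by
  rw [← Finset.sum_filter]
  set F := (Icc 1 N).filter Squarefree with hF
  have hinj : ∀ b ∈ F, ∀ b' ∈ F, b.primeFactors = b'.primeFactors → b = b' := by
    intro b hb b' hb' h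
    have hsb : Squarefree b := (Finset.mem_filter.mp hb).2
    have hsb' : Squarefree b' := (Finset.mem_filter.mp hb').2
    rw [← Nat.prod_primeFactors_of_squarefree hsb, ← Nat.prod_primeFactors_of_squarefree hsb', h]
  have h1 : ∑ b ∈ F, Psi16 b
      = ∑ S ∈ F.image (fun b => b.primeFactors), ∏ p ∈ S, w16 p := by
    rw [Finset.sum_image hinj]
    rfl
  rw [h1]
  have hsub : F.image (fun b => b.primeFactors) ⊆ ((N + 1).primesBelow).powerset := by
    intro S hS
    rcases Finset.mem_image.mp hS with ⟨b, hb, rfl⟩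
    rw [Finset.mem_powerset]
    intro p hp
    have hple : p ≤ b := Nat.le_of_dvd
      (by have := (Finset.mem_filter.mp hb).1; rw [Finset.mem_Icc] at this; omega)
      (Nat.dvd_of_mem_primeFactors hp)
    have hbN : b ≤ N := by
      have := (Finset.mem_filter.mp hb).1; rw [Finset.mem_Icc] at this; exact this.2
    exact Nat.mem_primesBelow.mpr ⟨by omega, Nat.prime_of_mem_primeFactors hp⟩
  have h2 : ∑ S ∈ F.image (fun b => b.primeFactors), ∏ p ∈ S, w16 p
      ≤ ∑ S ∈ ((N + 1).primesBelow).powerset, ∏ p ∈ S, w16 p := by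
    refine Finset.sum_le_sum_of_subset_of_nonneg hsub fun S hS _ => ?_
    refine Finset.prod_nonneg fun p hp => w16_nonneg ?_
    exact Nat.prime_of_mem_primesBelow (Finset.mem_powerset.mp hS hp)
  refine h2.trans ?_
  have h3 : ∑ S ∈ ((N + 1).primesBelow).powerset, ∏ p ∈ S, w16 p
      = ∏ p ∈ (N + 1).primesBelow, (w16 p + 1) := by
    rw [Finset.prod_add]
    exact Finset.sum_congr rfl fun S _ => by simp
  rw [h3]
  have h5 : ∀ p ∈ (N + 1).primesBelow, (w16 p + 1) = 1 + w16 p := fun p _ => by ring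
  rw [Finset.prod_congr rfl h5]
  exact prod_le_P16' _ fun p hp => Nat.prime_of_mem_primesBelow hp

/-- The per-`d` identity. -/
private lemma f_eq (d : ℕ) (hd : 1 ≤ d) :
    (d : ℝ) ^ 2 / (Nat.totient d : ℝ) ^ 3
      = ∑ b ∈ d.divisors.filter Squarefree, ((b : ℝ) * Psi16 b) / d := by
  have hd0 : d ≠ 0 := by omega
  have hd0' : (d : ℝ) ≠ 0 := by exact_mod_cast hd0
  have hφ : (Nat.totient d : ℝ) = d * ∏ p ∈ d.primeFactors, (1 - (p : ℝ)⁻¹) := by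
    have h := Nat.totient_eq_mul_prod_factors d
    have h2 := congrArg (fun r : ℚ => (r : ℝ)) h
    push_cast at h2
    exact h2
  have hrw : ∑ b ∈ d.divisors.filter Squarefree, ((b : ℝ) * Psi16 b)
      = ∏ p ∈ d.primeFactors, ((p : ℝ) * w16 p + 1) := by
    rw [sum_sqfree_divisors hd0 (fun b => (b : ℝ) * Psi16 b)]
    rw [Finset.prod_add]
    refine Finset.sum_congr rfl fun S hS => ?_
    have hSsub : S ⊆ d.primeFactors := Finset.mem_powerset.mp hS
    have hprime : ∀ p ∈ S, p.Prime := fun p hp =>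
      Nat.prime_of_mem_primeFactors (hSsub hp)
    have hPF : (∏ p ∈ S, p).primeFactors = S := Nat.primeFactors_prod hprime
    rw [Psi16, hPF]
    push_cast
    rw [← Finset.prod_mul_distrib]
    simp
  have hpf : ∀ p ∈ d.primeFactors, ((p : ℝ) * w16 p + 1) = ((p : ℝ) / ((p : ℝ) - 1)) ^ 3 :=
    fun p hp => one_add_mul_w16 (Nat.prime_of_mem_primeFactors hp)
  set t : ℝ := ∏ p ∈ d.primeFactors, (1 - (p : ℝ)⁻¹) with ht
  set u : ℝ := ∏ p ∈ d.primeFactors, ((p : ℝ) / ((p : ℝ) - 1)) ^ 3 with hu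
  have hut : u * t ^ 3 = 1 := by
    rw [hu, ht, ← Finset.prod_pow, ← Finset.prod_mul_distrib]
    refine Finset.prod_eq_one fun p hp => ?_
    have h2 : (2 : ℝ) ≤ p := by exact_mod_cast (Nat.prime_of_mem_primeFactors hp).two_le
    have h0 : (p : ℝ) ≠ 0 := by linarith
    have h1 : (p : ℝ) - 1 ≠ 0 := by linarith
    rw [← mul_pow]
    have : (p : ℝ) / ((p : ℝ) - 1) * (1 - (p : ℝ)⁻¹) = 1 := by field_simp
    rw [this, one_pow]
  have ht0 : t ≠ 0 := by
    intro h
    rw [h] at hut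
    norm_num at hut
  rw [← Finset.sum_div, hrw, Finset.prod_congr rfl hpf, ← hu, hφ]
  have hdt : ((d : ℝ) * t) ^ 3 ≠ 0 := pow_ne_zero 3 (mul_ne_zero hd0' ht0)
  rw [div_eq_div_iff hdt hd0']
  linear_combination (-((d : ℝ) ^ 3)) * hut

/-- The two-variable summand. -/
private def G16 (q a b : ℕ) : ℝ :=
  (if Nat.Coprime a q then (a : ℝ)⁻¹ else 0) * (if Squarefree b then Psi16 b else 0)

private lemma G16_nonneg (q a b : ℕ) : 0 ≤ G16 q a b := by
  unfold G16
  apply mul_nonneg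
  · split
    · positivity
    · exact le_rfl
  · split
    · exact Psi16_nonneg b
    · exact le_rfl

private lemma step1 (q d : ℕ) (hd : 1 ≤ d) :
    ((d : ℝ) ^ 2 / (Nat.totient d : ℝ) ^ 3) * (if Nat.Coprime d q then 1 else 0)
      ≤ ∑ x ∈ d.divisorsAntidiagonal, G16 q x.1 x.2 := by
  have hd0 : d ≠ 0 := by omega
  by_cases hcop : Nat.Coprime d q
  · rw [if_pos hcop, mul_one, f_eq d hd]
    rw [Nat.sum_divisorsAntidiagonal' (f := fun a b => G16 q a b)]
    rw [Finset.sum_filter]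
    refine le_of_eq (Finset.sum_congr rfl fun b hb => ?_)
    have hbd : b ∣ d := (Nat.mem_divisors.mp hb).1
    have hb0 : b ≠ 0 := fun h => hd0 (by simpa [h] using hbd)
    have hdvd : d / b ∣ d := Nat.div_dvd_of_dvd hbd
    have hcop' : Nat.Coprime (d / b) q := Nat.Coprime.coprime_dvd_left hdvd hcop
    rw [G16, if_pos hcop']
    have hcast : ((d / b : ℕ) : ℝ) = (d : ℝ) / b := Nat.cast_div hbd (by exact_mod_cast hb0)
    by_cases hsq : Squarefree b
    · rw [if_pos hsq, if_pos hsq, hcast]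
      have hb0' : (b : ℝ) ≠ 0 := by exact_mod_cast hb0
      have hd0' : (d : ℝ) ≠ 0 := by exact_mod_cast hd0
      field_simp
    · simp [hsq]
  · rw [if_neg hcop, mul_zero]
    exact Finset.sum_nonneg fun x _ => G16_nonneg q x.1 x.2

private lemma step2 (q N : ℕ) :
    ∑ d ∈ Icc 1 N, ∑ x ∈ d.divisorsAntidiagonal, G16 q x.1 x.2
      ≤ (∑ a ∈ Icc 1 N, if Nat.Coprime a q then (a : ℝ)⁻¹ else 0)
        * (∑ b ∈ Icc 1 N, if Squarefree b then Psi16 b else 0) := by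
  rw [Finset.sum_sigma']
  have hinj : ∀ x ∈ (Icc 1 N).sigma (fun d => d.divisorsAntidiagonal),
      ∀ y ∈ (Icc 1 N).sigma (fun d => d.divisorsAntidiagonal),
      x.2 = y.2 → x = y := by
    intro x hx y hy h
    rw [Finset.mem_sigma] at hx hy
    have hx2 := (Nat.mem_divisorsAntidiagonal.mp hx.2).1
    have hy2 := (Nat.mem_divisorsAntidiagonal.mp hy.2).1
    have h1 : x.1 = y.1 := by rw [← hx2, ← hy2, h]
    exact Sigma.ext h1 (heq_of_eq h)
  have himg : ∑ x ∈ (Icc 1 N).sigma (fun d => d.divisorsAntidiagonal), G16 q x.2.1 x.2.2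
      = ∑ y ∈ ((Icc 1 N).sigma (fun d => d.divisorsAntidiagonal)).image (fun x => x.2),
          G16 q y.1 y.2 := by
    rw [Finset.sum_image hinj]
  rw [himg]
  have hsub : ((Icc 1 N).sigma (fun d => d.divisorsAntidiagonal)).image (fun x => x.2)
      ⊆ Icc 1 N ×ˢ Icc 1 N := by
    intro y hy
    rcases Finset.mem_image.mp hy with ⟨x, hx, rfl⟩
    rw [Finset.mem_sigma] at hx
    have h1 := Nat.mem_divisorsAntidiagonal.mp hx.2
    have hd := Finset.mem_Icc.mp hx.1
    have hab : x.2.1 * x.2.2 = x.1 := h1.1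
    have ha0 : x.2.1 ≠ 0 := by intro h; rw [h] at hab; simp at hab; omega
    have hb0 : x.2.2 ≠ 0 := by intro h; rw [h] at hab; simp at hab; omega
    rw [Finset.mem_product, Finset.mem_Icc, Finset.mem_Icc]
    have haN : x.2.1 ≤ N := by
      calc x.2.1 ≤ x.2.1 * x.2.2 := Nat.le_mul_of_pos_right _ (by omega)
        _ = x.1 := hab
        _ ≤ N := hd.2
    have hbN : x.2.2 ≤ N := by
      calc x.2.2 ≤ x.2.1 * x.2.2 := Nat.le_mul_of_pos_left _ (by omega)
        _ = x.1 := hab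
        _ ≤ N := hd.2
    exact ⟨⟨by omega, haN⟩, ⟨by omega, hbN⟩⟩
  have hle : ∑ y ∈ ((Icc 1 N).sigma (fun d => d.divisorsAntidiagonal)).image (fun x => x.2),
        G16 q y.1 y.2
      ≤ ∑ y ∈ Icc 1 N ×ˢ Icc 1 N, G16 q y.1 y.2 :=
    Finset.sum_le_sum_of_subset_of_nonneg hsub fun y _ _ => G16_nonneg q y.1 y.2
  refine hle.trans (le_of_eq ?_)
  rw [Finset.sum_product]
  rw [Finset.sum_mul]
  refine Finset.sum_congr rfl fun a _ => ?_
  rw [Finset.mul_sum]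
  rfl

/-- Partial harmonic sum. -/
private def Hs (n : ℕ) : ℝ := ∑ m ∈ Icc 1 n, (m : ℝ)⁻¹

private lemma Hs_eq_harmonic (n : ℕ) : Hs n = (harmonic n : ℝ) := by
  rw [harmonic_eq_sum_Icc]
  push_cast
  rfl

private lemma Hs_nonneg (n : ℕ) : 0 ≤ Hs n :=
  Finset.sum_nonneg fun m _ => by positivity

private lemma Hs_le {n : ℕ} {x : ℝ} (hx : 2 ≤ x) (hn : (n : ℝ) ≤ x) :
    Hs n ≤ 1 + Real.log x := by
  rcases Nat.eq_zero_or_pos n with h | h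
  · subst h
    have h0 : Hs 0 = 0 := by simp [Hs]
    rw [h0]
    have := Real.log_nonneg (by linarith : (1:ℝ) ≤ x)
    linarith
  · rw [Hs_eq_harmonic]
    refine (harmonic_le_one_add_log n).trans ?_
    have : Real.log n ≤ Real.log x :=
      Real.log_le_log (by exact_mod_cast h) hn
    linarith

private lemma log_le_Hs (n : ℕ) : Real.log ((n : ℝ) + 1) ≤ Hs n := by
  rw [Hs_eq_harmonic]
  have := log_add_one_le_harmonic n
  push_cast at this ⊢
  exact this

/-- The coprimality indicator via Möbius. -/
private lemma coprime_indicator (q a : ℕ) (hq : q ≠ 0) (ha : a ≠ 0) :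
    (if Nat.Coprime a q then (1 : ℝ) else 0)
      = ∑ e ∈ q.divisors.filter (· ∣ a), (moebius e : ℝ) := by
  have hgcd0 : Nat.gcd a q ≠ 0 := Nat.gcd_ne_zero_right hq
  have hdiv : (Nat.gcd a q).divisors = q.divisors.filter (· ∣ a) := by
    ext e
    simp only [Nat.mem_divisors, Finset.mem_filter]
    constructor
    · rintro ⟨he, -⟩
      exact ⟨⟨he.trans (Nat.gcd_dvd_right a q), hq⟩, he.trans (Nat.gcd_dvd_left a q)⟩
    · rintro ⟨⟨heq, -⟩, hea⟩
      exact ⟨Nat.dvd_gcd hea heq, hgcd0⟩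
  have hμζ : ∑ e ∈ (Nat.gcd a q).divisors, moebius e
      = if Nat.gcd a q = 1 then 1 else 0 := by
    have h : (moebius * ((zeta : ArithmeticFunction ℕ) : ArithmeticFunction ℤ)) (Nat.gcd a q)
        = (1 : ArithmeticFunction ℤ) (Nat.gcd a q) := by rw [moebius_mul_coe_zeta]
    rwa [coe_mul_zeta_apply, one_apply] at h
  have : (∑ e ∈ q.divisors.filter (· ∣ a), moebius e)
      = if Nat.Coprime a q then 1 else 0 := by
    rw [← hdiv, hμζ]
  calc (if Nat.Coprime a q then (1 : ℝ) else 0)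
      = ((if Nat.Coprime a q then (1 : ℤ) else 0 : ℤ) : ℝ) := by split <;> norm_num
    _ = ((∑ e ∈ q.divisors.filter (· ∣ a), moebius e : ℤ) : ℝ) := by rw [this]
    _ = ∑ e ∈ q.divisors.filter (· ∣ a), (moebius e : ℝ) := by push_cast; rfl

private lemma S_eq (q N : ℕ) (hq : q ≠ 0) :
    ∑ a ∈ Icc 1 N, (if Nat.Coprime a q then (a : ℝ)⁻¹ else 0)
      = ∑ e ∈ q.divisors, (moebius e : ℝ) * ((e : ℝ)⁻¹ * Hs (N / e)) := by
  have h1 : ∀ a ∈ Icc 1 N, (if Nat.Coprime a q then (a : ℝ)⁻¹ else 0)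
      = ∑ e ∈ q.divisors, (if e ∣ a then (moebius e : ℝ) * (a : ℝ)⁻¹ else 0) := by
    intro a ha
    have ha0 : a ≠ 0 := by have := Finset.mem_Icc.mp ha; omega
    have h := coprime_indicator q a hq ha0
    have : (if Nat.Coprime a q then (a : ℝ)⁻¹ else 0)
        = (if Nat.Coprime a q then (1 : ℝ) else 0) * (a : ℝ)⁻¹ := by split <;> ring
    rw [this, h, Finset.sum_mul, ← Finset.sum_filter]
  rw [Finset.sum_congr rfl h1, Finset.sum_comm]
  refine Finset.sum_congr rfl fun e he => ?_
  have he1 : 1 ≤ e := (Nat.pos_of_mem_divisors he)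
  have he0 : (e : ℝ) ≠ 0 := by exact_mod_cast by omega
  rw [← Finset.sum_filter]
  have hbij : ∑ a ∈ (Icc 1 N).filter (e ∣ ·), (moebius e : ℝ) * (a : ℝ)⁻¹
      = ∑ m ∈ Icc 1 (N / e), (moebius e : ℝ) * ((e * m : ℕ) : ℝ)⁻¹ := by
    refine Finset.sum_nbij' (fun a => a / e) (fun m => e * m) ?_ ?_ ?_ ?_ ?_
    · intro a haf
      rw [Finset.mem_filter, Finset.mem_Icc] at haf
      obtain ⟨⟨ha1, haN⟩, hea⟩ := haf
      rw [Finset.mem_Icc]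
      constructor
      · rw [Nat.one_le_div_iff (by omega)]
        exact Nat.le_of_dvd (by omega) hea
      · exact Nat.div_le_div_right haN
    · intro m hm
      rw [Finset.mem_Icc] at hm
      rw [Finset.mem_filter, Finset.mem_Icc]
      have hme : m * e ≤ N := (Nat.le_div_iff_mul_le (by omega)).mp hm.2
      exact ⟨⟨Nat.mul_pos (by omega) (by omega), by simpa [mul_comm] using hme⟩,
        dvd_mul_right e m⟩
    · intro a haf
      rw [Finset.mem_filter] at haf
      exact Nat.mul_div_cancel' haf.2
    · intro m _
      exact Nat.mul_div_cancel_left m (by omega)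
    · intro a haf
      rw [Finset.mem_filter] at haf
      rw [Nat.mul_div_cancel' haf.2]
  rw [hbij, Hs, Finset.mul_sum, Finset.mul_sum]
  refine Finset.sum_congr rfl fun m hm => ?_
  have hm0 : (m : ℝ) ≠ 0 := by
    have := (Finset.mem_Icc.mp hm).1; exact_mod_cast by omega
  push_cast
  rw [mul_inv]

private lemma moebius_div_sum (q : ℕ) (hq : q ≠ 0) :
    ∑ e ∈ q.divisors, (moebius e : ℝ) * (e : ℝ)⁻¹ = (Nat.totient q : ℝ) / q := by
  have hsplit : ∑ e ∈ q.divisors, (moebius e : ℝ) * (e : ℝ)⁻¹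
      = ∑ e ∈ q.divisors.filter Squarefree, (moebius e : ℝ) * (e : ℝ)⁻¹ := by
    rw [Finset.sum_filter]
    refine Finset.sum_congr rfl fun e _ => ?_
    split
    · rfl
    · rename_i hsq
      rw [moebius_eq_zero_of_not_squarefree hsq]
      norm_num
  rw [hsplit, sum_sqfree_divisors hq (fun e => (moebius e : ℝ) * (e : ℝ)⁻¹)]
  have hstep : ∀ S ∈ q.primeFactors.powerset,
      (moebius (∏ p ∈ S, p) : ℝ) * ((∏ p ∈ S, p : ℕ) : ℝ)⁻¹
        = ∏ p ∈ S, (-(p : ℝ)⁻¹) := by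
    intro S hS
    have hSsub : S ⊆ q.primeFactors := Finset.mem_powerset.mp hS
    have hμ : moebius (∏ p ∈ S, p) = ∏ p ∈ S, moebius p :=
      isMultiplicative_moebius.map_prod_of_subset_primeFactors q S hSsub
    have hμp : ∀ p ∈ S, moebius p = -1 := fun p hp =>
      moebius_apply_prime (Nat.prime_of_mem_primeFactors (hSsub hp))
    rw [hμ, Finset.prod_congr rfl hμp]
    push_cast
    rw [← Finset.prod_inv_distrib, ← Finset.prod_mul_distrib]
    exact Finset.prod_congr rfl fun p _ => by ring
  rw [Finset.sum_congr rfl hstep]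
  have hprod : ∑ S ∈ q.primeFactors.powerset, ∏ p ∈ S, (-(p : ℝ)⁻¹)
      = ∏ p ∈ q.primeFactors, (-(p : ℝ)⁻¹ + 1) := by
    rw [Finset.prod_add]
    exact Finset.sum_congr rfl fun S _ => by simp
  rw [hprod]
  have hφ : (Nat.totient q : ℝ) = q * ∏ p ∈ q.primeFactors, (1 - (p : ℝ)⁻¹) := by
    have h := Nat.totient_eq_mul_prod_factors q
    have h2 := congrArg (fun r : ℚ => (r : ℝ)) h
    push_cast at h2
    exact h2
  have hq0 : (q : ℝ) ≠ 0 := by exact_mod_cast hq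
  rw [hφ]
  have hcancel : (q : ℝ) * (∏ p ∈ q.primeFactors, (1 - (p : ℝ)⁻¹)) / q
      = ∏ p ∈ q.primeFactors, (1 - (p : ℝ)⁻¹) := by
    field_simp
  rw [hcancel]
  exact Finset.prod_congr rfl fun p _ => by ring

private lemma term_le (e N : ℕ) (he : 1 ≤ e) {x : ℝ} (hx : 2 ≤ x) (hN : N = ⌊x⌋₊) :
    (moebius e : ℝ) * ((e : ℝ)⁻¹ * Hs (N / e))
      ≤ (moebius e : ℝ) * (e : ℝ)⁻¹ * Real.log x + (1 + Real.log (2 * e)) := by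
  have he1 : (1 : ℝ) ≤ e := by exact_mod_cast he
  have he0 : (0 : ℝ) < e := by linarith
  have hinv1 : (e : ℝ)⁻¹ ≤ 1 := by
    rw [inv_le_one_iff₀]; right; exact he1
  have hinv0 : (0 : ℝ) ≤ (e : ℝ)⁻¹ := by positivity
  have hlogx : 0 ≤ Real.log x := Real.log_nonneg (by linarith)
  have hlog2e : 0 ≤ Real.log (2 * e) := Real.log_nonneg (by linarith)
  have hHub : Hs (N / e) ≤ 1 + Real.log x := by
    refine Hs_le hx ?_
    have h1 : (N / e : ℕ) ≤ N := Nat.div_le_self N e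
    have h2 : (N : ℝ) ≤ x := by rw [hN]; exact Nat.floor_le (by linarith)
    calc ((N / e : ℕ) : ℝ) ≤ (N : ℝ) := by exact_mod_cast h1
      _ ≤ x := h2
  have hHlb : Real.log x - Real.log (2 * e) ≤ Hs (N / e) := by
    have hxN : x - 1 < (N : ℝ) + 1 - 1 + 1 := by
      rw [hN]
      have := Nat.lt_floor_add_one x
      linarith
    have hxN' : x - 1 ≤ (N : ℝ) := by
      rw [hN]
      have := Nat.lt_floor_add_one x
      linarith
    have hdiv : (N : ℝ) / e < ((N / e : ℕ) : ℝ) + 1 := by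
      have hmod := Nat.div_add_mod N e
      have hmodlt : N % e < e := Nat.mod_lt _ (by omega)
      have : (N : ℝ) = e * ((N / e : ℕ) : ℝ) + ((N % e : ℕ) : ℝ) := by
        exact_mod_cast congrArg (fun n : ℕ => (n : ℝ)) hmod.symm
      rw [div_lt_iff₀ he0, this]
      have : ((N % e : ℕ) : ℝ) < e := by exact_mod_cast hmodlt
      nlinarith
    have hle : x / (2 * e) ≤ ((N / e : ℕ) : ℝ) + 1 := by
      have h1 : x / (2 * e) ≤ (x - 1) / e := by
        rw [div_le_div_iff₀ (by linarith) he0]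
        nlinarith
      have h2 : (x - 1) / e ≤ (N : ℝ) / e := by gcongr
      linarith
    have hlog1 : Real.log (x / (2 * e)) ≤ Real.log (((N / e : ℕ) : ℝ) + 1) :=
      Real.log_le_log (by positivity) hle
    have hlog2 : Real.log (x / (2 * e)) = Real.log x - Real.log (2 * e) := by
      rw [Real.log_div (by linarith) (by positivity)]
    rw [← hlog2]
    exact hlog1.trans (log_le_Hs (N / e))
  have hH0 : 0 ≤ Hs (N / e) := Hs_nonneg _
  by_cases hsq : Squarefree e
  · rcases Nat.even_or_odd (cardFactors e) with hev | hod
    · have hμ : moebius e = 1 := by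
        rw [moebius_apply_of_squarefree hsq, hev.neg_one_pow]
      rw [hμ]
      push_cast
      have h1 : (e : ℝ)⁻¹ * Hs (N / e) ≤ (e : ℝ)⁻¹ * (1 + Real.log x) :=
        mul_le_mul_of_nonneg_left hHub hinv0
      nlinarith
    · have hμ : moebius e = -1 := by
        rw [moebius_apply_of_squarefree hsq, hod.neg_one_pow]
      rw [hμ]
      push_cast
      have h1 : (e : ℝ)⁻¹ * (Real.log x - Hs (N / e)) ≤ (e : ℝ)⁻¹ * Real.log (2 * e) :=
        mul_le_mul_of_nonneg_left (by linarith) hinv0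
      have h2 : (e : ℝ)⁻¹ * Real.log (2 * e) ≤ Real.log (2 * e) := by
        nlinarith
      nlinarith
  · rw [moebius_eq_zero_of_not_squarefree hsq]
    push_cast
    nlinarith

private lemma S_le (q : ℕ) (hq : q ≠ 0) {x : ℝ} (hx : 2 ≤ x) :
    ∑ a ∈ Icc 1 ⌊x⌋₊, (if Nat.Coprime a q then (a : ℝ)⁻¹ else 0)
      ≤ (Nat.totient q : ℝ) / q * Real.log x
        + ∑ e ∈ q.divisors, (1 + Real.log (2 * e)) := by
  rw [S_eq q ⌊x⌋₊ hq]
  have h1 : ∑ e ∈ q.divisors, (moebius e : ℝ) * ((e : ℝ)⁻¹ * Hs (⌊x⌋₊ / e))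
      ≤ ∑ e ∈ q.divisors,
          ((moebius e : ℝ) * (e : ℝ)⁻¹ * Real.log x + (1 + Real.log (2 * e))) :=
    Finset.sum_le_sum fun e he => term_le e ⌊x⌋₊ (Nat.pos_of_mem_divisors he) hx rfl
  refine h1.trans (le_of_eq ?_)
  rw [Finset.sum_add_distrib, ← Finset.sum_mul, moebius_div_sum q hq]

end Aux16

/-- For q ≥ 1 and χ₀ the principal character mod q (indicator of coprimality to q):
∑_{d ≤ x} (d²/φ(d)³) χ₀(d) ≤ (φ(q)/q)(log x) ∏_p (1 + (3p²-3p+1)/(p⁴-3p³+3p²-p)) (1+o(1)). -/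
theorem stmt_16 (q : ℕ) (hq : 1 ≤ q) :
    ∃ E : ℝ → ℝ, Tendsto E atTop (nhds 0) ∧ ∀ x : ℝ, 2 ≤ x →
      ∑ d ∈ Finset.Icc 1 ⌊x⌋₊,
          ((d : ℝ)^2 / (Nat.totient d : ℝ)^3) * (if Nat.Coprime d q then 1 else 0)
        ≤ ((Nat.totient q : ℝ) / q) * Real.log x *
            (∏' p : Nat.Primes,
              (1 + (3 * ((p : ℕ) : ℝ)^2 - 3 * ((p : ℕ) : ℝ) + 1) /
                (((p : ℕ) : ℝ)^4 - 3 * ((p : ℕ) : ℝ)^3 + 3 * ((p : ℕ) : ℝ)^2 - ((p : ℕ) : ℝ)))) *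
            (1 + E x) := by
  classical
  have hq0 : q ≠ 0 := by omega
  have hq0' : (q : ℝ) ≠ 0 := by exact_mod_cast hq0
  have hφpos : 0 < (Nat.totient q : ℝ) := by
    exact_mod_cast Nat.totient_pos.mpr (by omega)
  set C : ℝ := ∑ e ∈ q.divisors, (1 + Real.log (2 * e)) with hC
  refine ⟨fun x => (C * q / Nat.totient q) / Real.log x, ?_, ?_⟩
  · exact Tendsto.div_atTop tendsto_const_nhds Real.tendsto_log_atTop
  · intro x hx
    have hlogpos : 0 < Real.log x := Real.log_pos (by linarith)
    have hPeq : (∏' p : Nat.Primes,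
        (1 + (3 * ((p : ℕ) : ℝ)^2 - 3 * ((p : ℕ) : ℝ) + 1) /
          (((p : ℕ) : ℝ)^4 - 3 * ((p : ℕ) : ℝ)^3 + 3 * ((p : ℕ) : ℝ)^2 - ((p : ℕ) : ℝ))))
        = P16 := rfl
    rw [hPeq]
    set N := ⌊x⌋₊ with hN
    set S : ℝ := ∑ a ∈ Icc 1 N, (if Nat.Coprime a q then (a : ℝ)⁻¹ else 0) with hS
    set T : ℝ := ∑ b ∈ Icc 1 N, (if Squarefree b then Psi16 b else 0) with hT
    have hstep1 : ∑ d ∈ Finset.Icc 1 N,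
        ((d : ℝ)^2 / (Nat.totient d : ℝ)^3) * (if Nat.Coprime d q then 1 else 0)
        ≤ ∑ d ∈ Icc 1 N, ∑ y ∈ d.divisorsAntidiagonal, G16 q y.1 y.2 :=
      Finset.sum_le_sum fun d hd => step1 q d (Finset.mem_Icc.mp hd).1
    have hstep2 := step2 q N
    have hTP : T ≤ P16 := psi_sum_le N
    have hSle : S ≤ (Nat.totient q : ℝ) / q * Real.log x + C := S_le q hq0 hx
    have hS0 : 0 ≤ S := Finset.sum_nonneg fun a _ => by split <;> positivity
    have hT0 : 0 ≤ T := Finset.sum_nonneg fun b _ => by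
      split
      · exact Psi16_nonneg b
      · exact le_refl 0
    have hC0 : 0 ≤ C := Finset.sum_nonneg fun e he => by
      have he1 : 1 ≤ e := Nat.pos_of_mem_divisors he
      have : (0:ℝ) ≤ Real.log (2 * e) := Real.log_nonneg (by
        have : (1:ℝ) ≤ e := by exact_mod_cast he1
        linarith)
      linarith
    have hU0 : 0 ≤ (Nat.totient q : ℝ) / q * Real.log x + C := by positivity
    have hmain : ∑ d ∈ Finset.Icc 1 N,
        ((d : ℝ)^2 / (Nat.totient d : ℝ)^3) * (if Nat.Coprime d q then 1 else 0)
        ≤ ((Nat.totient q : ℝ) / q * Real.log x + C) * P16 := by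
      refine hstep1.trans (hstep2.trans ?_)
      exact mul_le_mul hSle hTP hT0 hU0
    refine hmain.trans (le_of_eq ?_)
    field_simp
end

section
/- For real H with 0 < H ≤ 1 and real x ≥ 2, ∑_{p < exp(1/H)} (1/p) | (p^{-iH} - 1)/(-iH log p) - 1 |² = O(1) and ∑_{exp(1/H) ≤ p < x} 1/p = O(log⁺(H log x) + 1), where the sums are over primes p. -/
open Finset

private lemma theta_le (n : ℕ) :
    ∑ p ∈ Nat.primesBelow n, Real.log p ≤ n * Real.log 4 := by
  have h1 : ∀ p ∈ Nat.primesBelow n, ((p : ℕ) : ℝ) ≠ 0 := fun p hp =>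
    Nat.cast_ne_zero.mpr (Nat.prime_of_mem_primesBelow hp).pos.ne'
  have hprod : Real.log (∏ p ∈ Nat.primesBelow n, (p : ℝ)) =
      ∑ p ∈ Nat.primesBelow n, Real.log p := Real.log_prod h1
  rw [← hprod]
  have hsub : Nat.primesBelow n ⊆ (Finset.range (n + 1)).filter Nat.Prime := by
    intro p hp
    rw [Nat.mem_primesBelow] at hp
    exact mem_filter.mpr ⟨mem_range.mpr (hp.1.trans (Nat.lt_succ_self n)), hp.2⟩
  have hle : (∏ p ∈ Nat.primesBelow n, p) ≤ 4 ^ n := by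
    calc (∏ p ∈ Nat.primesBelow n, p)
        ≤ ∏ p ∈ (Finset.range (n + 1)).filter Nat.Prime, p := by
          apply Finset.prod_le_prod_of_subset_of_one_le' hsub
          intro i hi _
          exact (mem_filter.mp hi).2.one_lt.le
      _ = primorial n := rfl
      _ ≤ 4 ^ n := primorial_le_four_pow n
  have hle' : (∏ p ∈ Nat.primesBelow n, (p : ℝ)) ≤ (4 : ℝ) ^ n := by
    have := (Nat.cast_le (α := ℝ)).mpr hle
    push_cast at this
    exact this
  have hpos : (0 : ℝ) < ∏ p ∈ Nat.primesBelow n, (p : ℝ) := by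
    apply Finset.prod_pos
    intro p hp
    exact_mod_cast (Nat.prime_of_mem_primesBelow hp).pos
  calc Real.log (∏ p ∈ Nat.primesBelow n, (p : ℝ)) ≤ Real.log ((4 : ℝ) ^ n) :=
        Real.log_le_log hpos hle'
    _ = n * Real.log 4 := by rw [Real.log_pow]

private lemma mem_block {p k : ℕ}
    (hp : p ∈ Nat.primesBelow (2 ^ (k + 1)) \ Nat.primesBelow (2 ^ k)) :
    p.Prime ∧ 2 ^ k ≤ p ∧ p < 2 ^ (k + 1) := by
  rw [Finset.mem_sdiff, Nat.mem_primesBelow, Nat.mem_primesBelow] at hp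
  refine ⟨hp.1.2, ?_, hp.1.1⟩
  by_contra h
  exact hp.2 ⟨Nat.lt_of_not_le h, hp.1.2⟩

private lemma block_log (k : ℕ) :
    ∑ p ∈ Nat.primesBelow (2 ^ (k + 1)) \ Nat.primesBelow (2 ^ k),
      Real.log p / p ≤ 2 * Real.log 4 := by
  have h1 : ∑ p ∈ Nat.primesBelow (2 ^ (k + 1)) \ Nat.primesBelow (2 ^ k),
      Real.log p / p ≤
      ∑ p ∈ Nat.primesBelow (2 ^ (k + 1)) \ Nat.primesBelow (2 ^ k),
        Real.log p / (2 ^ k : ℝ) := by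
    apply Finset.sum_le_sum
    intro p hp
    obtain ⟨hpp, hlb, _⟩ := mem_block hp
    have hlogp : (0 : ℝ) ≤ Real.log p :=
      Real.log_nonneg (by exact_mod_cast hpp.one_lt.le)
    apply div_le_div_of_nonneg_left hlogp (by positivity)
    exact_mod_cast hlb
  have h2 : ∑ p ∈ Nat.primesBelow (2 ^ (k + 1)) \ Nat.primesBelow (2 ^ k),
      Real.log p / (2 ^ k : ℝ) ≤
      ∑ p ∈ Nat.primesBelow (2 ^ (k + 1)), Real.log p / (2 ^ k : ℝ) := by
    apply Finset.sum_le_sum_of_subset_of_nonneg (Finset.sdiff_subset)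
    intro p hp _
    have : (1 : ℝ) ≤ p := by
      exact_mod_cast (Nat.prime_of_mem_primesBelow hp).one_lt.le
    have := Real.log_nonneg this
    positivity
  have h3 : ∑ p ∈ Nat.primesBelow (2 ^ (k + 1)), Real.log p / (2 ^ k : ℝ)
      = (∑ p ∈ Nat.primesBelow (2 ^ (k + 1)), Real.log p) / (2 ^ k : ℝ) := by
    rw [Finset.sum_div]
  have h4 := theta_le (2 ^ (k + 1))
  have h5 : ((2 ^ (k + 1) : ℕ) : ℝ) = 2 * 2 ^ k := by
    push_cast [pow_succ]; ring
  calc ∑ p ∈ Nat.primesBelow (2 ^ (k + 1)) \ Nat.primesBelow (2 ^ k),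
        Real.log p / p
      ≤ (∑ p ∈ Nat.primesBelow (2 ^ (k + 1)), Real.log p) / (2 ^ k : ℝ) := by
        rw [← h3]; exact h1.trans h2
    _ ≤ ((2 ^ (k + 1) : ℕ) : ℝ) * Real.log 4 / (2 ^ k : ℝ) := by
        apply div_le_div_of_nonneg_right h4 (by positivity) |>.trans_eq rfl
    _ = 2 * Real.log 4 := by rw [h5]; field_simp

private lemma sum_log_div_le (K : ℕ) :
    ∑ p ∈ Nat.primesBelow (2 ^ K), Real.log p / p ≤ 2 * Real.log 4 * K := by
  induction K with
  | zero =>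
    have h : Nat.primesBelow 1 = ∅ := by decide
    norm_num [h]
  | succ K ih =>
    have hsub : Nat.primesBelow (2 ^ K) ⊆ Nat.primesBelow (2 ^ (K + 1)) := by
      intro p hp
      rw [Nat.mem_primesBelow] at hp ⊢
      exact ⟨hp.1.trans_le (Nat.pow_le_pow_right (by norm_num) (Nat.le_succ K)), hp.2⟩
    have := Finset.sum_sdiff (f := fun p : ℕ => Real.log p / p) hsub
    have hb := block_log K
    push_cast
    nlinarith [this, hb, ih]

private lemma block_recip (k : ℕ) (hk : 1 ≤ k) :
    ∑ p ∈ Nat.primesBelow (2 ^ (k + 1)) \ Nat.primesBelow (2 ^ k),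
      (1 : ℝ) / p ≤ 4 / k := by
  have hlog2 : (0 : ℝ) < Real.log 2 := Real.log_pos (by norm_num)
  have hk' : (0 : ℝ) < (k : ℝ) := by exact_mod_cast hk
  have h1 : ∑ p ∈ Nat.primesBelow (2 ^ (k + 1)) \ Nat.primesBelow (2 ^ k),
      (1 : ℝ) / p ≤
      ∑ p ∈ Nat.primesBelow (2 ^ (k + 1)) \ Nat.primesBelow (2 ^ k),
        (Real.log p / p) / (k * Real.log 2) := by
    apply Finset.sum_le_sum
    intro p hp
    obtain ⟨hpp, hlb, _⟩ := mem_block hp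
    have hppos : (0 : ℝ) < p := by exact_mod_cast hpp.pos
    have hlogp : (k : ℝ) * Real.log 2 ≤ Real.log p := by
      have h2k : ((2 ^ k : ℕ) : ℝ) ≤ (p : ℝ) := by exact_mod_cast hlb
      have : Real.log ((2 : ℝ) ^ k) ≤ Real.log p := by
        apply Real.log_le_log (by positivity)
        exact_mod_cast h2k
      rwa [Real.log_pow] at this
    rw [div_div, div_le_div_iff₀ hppos (by exact mul_pos hppos (mul_pos hk' hlog2))]
    nlinarith
  have h2 : ∑ p ∈ Nat.primesBelow (2 ^ (k + 1)) \ Nat.primesBelow (2 ^ k),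
      (Real.log p / p) / (k * Real.log 2) =
      (∑ p ∈ Nat.primesBelow (2 ^ (k + 1)) \ Nat.primesBelow (2 ^ k),
        Real.log p / p) / (k * Real.log 2) := by
    rw [Finset.sum_div]
  have h3 := block_log k
  have hlog4 : Real.log 4 = 2 * Real.log 2 := by
    rw [show (4 : ℝ) = 2 ^ 2 by norm_num, Real.log_pow]; push_cast; ring
  calc ∑ p ∈ Nat.primesBelow (2 ^ (k + 1)) \ Nat.primesBelow (2 ^ k), (1:ℝ)/p
      ≤ (∑ p ∈ Nat.primesBelow (2 ^ (k + 1)) \ Nat.primesBelow (2 ^ k),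
          Real.log p / p) / (k * Real.log 2) := by rw [← h2]; exact h1
    _ ≤ (2 * Real.log 4) / (k * Real.log 2) := by
        apply div_le_div_of_nonneg_right h3 (by positivity) |>.trans_eq rfl
    _ = 4 / k := by rw [hlog4]; field_simp; ring

private lemma sum_recip_le (k₀ : ℕ) (hk₀ : 1 ≤ k₀) (K : ℕ) (hK : k₀ ≤ K) :
    ∑ p ∈ Nat.primesBelow (2 ^ (K + 1)) \ Nat.primesBelow (2 ^ k₀), (1 : ℝ) / p
      ≤ 4 + 4 * Real.log K - 4 * Real.log k₀ := by
  induction K, hK using Nat.le_induction with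
  | base =>
    have := block_recip k₀ hk₀
    have h4 : (4 : ℝ) / k₀ ≤ 4 := by
      rw [div_le_iff₀ (by exact_mod_cast hk₀ : (0:ℝ) < (k₀:ℝ))]
      nlinarith [(by exact_mod_cast hk₀ : (1:ℝ) ≤ (k₀:ℝ))]
    linarith [this.trans h4]
  | succ K hKk ih =>
    have hsub1 : Nat.primesBelow (2 ^ k₀) ⊆ Nat.primesBelow (2 ^ (K + 1)) := by
      intro p hp
      rw [Nat.mem_primesBelow] at hp ⊢
      exact ⟨hp.1.trans_le (Nat.pow_le_pow_right (by norm_num) (by omega)), hp.2⟩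
    have hsub2 : Nat.primesBelow (2 ^ (K + 1)) ⊆ Nat.primesBelow (2 ^ (K + 2)) := by
      intro p hp
      rw [Nat.mem_primesBelow] at hp ⊢
      exact ⟨hp.1.trans_le (Nat.pow_le_pow_right (by norm_num) (by omega)), hp.2⟩
    have e1 := Finset.sum_sdiff_eq_sub (f := fun p : ℕ => (1:ℝ)/p) hsub1
    have e2 := Finset.sum_sdiff_eq_sub (f := fun p : ℕ => (1:ℝ)/p) (hsub1.trans hsub2)
    have e3 := Finset.sum_sdiff_eq_sub (f := fun p : ℕ => (1:ℝ)/p) hsub2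
    have hb := block_recip (K + 1) (by omega)
    have hKpos : (0 : ℝ) < (K : ℝ) := by
      exact_mod_cast Nat.lt_of_lt_of_le hk₀ hKk
    have hlog : 4 / ((K : ℝ) + 1) ≤ 4 * Real.log ((K : ℝ) + 1) - 4 * Real.log K := by
      have hx : (0 : ℝ) < (K : ℝ) / (K + 1) := by positivity
      have h0 := Real.log_le_sub_one_of_pos hx
      rw [Real.log_div (ne_of_gt hKpos) (by positivity)] at h0
      have h2 : (K : ℝ) / (K + 1) - 1 = -(1 / (K + 1)) := by field_simp; ring
      rw [h2] at h0
      have hd : 1 / ((K : ℝ) + 1) ≤ Real.log ((K : ℝ) + 1) - Real.log K := by linarith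
      calc 4 / ((K : ℝ) + 1) = 4 * (1 / ((K : ℝ) + 1)) := by ring
        _ ≤ 4 * (Real.log ((K : ℝ) + 1) - Real.log K) := by linarith
        _ = 4 * Real.log ((K : ℝ) + 1) - 4 * Real.log K := by ring
    rw [e2]
    rw [e1] at ih
    rw [e3] at hb
    push_cast at hb ⊢
    linarith

private lemma term_bound {H : ℝ} {p : ℕ} (hH : 0 < H) (hp : p.Prime)
    (hle : H * Real.log p ≤ 1) :
    ‖ (((p : ℂ) ^ (-(H : ℂ) * Complex.I) - 1) /
        (-Complex.I * (H : ℂ) * (Real.log p : ℂ)) - 1)‖ ≤ H * Real.log p := by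
  have hp2 : (2 : ℝ) ≤ p := by exact_mod_cast hp.two_le
  have hlogpos : 0 < Real.log p := Real.log_pos (by linarith)
  set z : ℂ := -(H : ℂ) * Complex.I * (Real.log p : ℂ) with hz
  have hzne : z ≠ 0 := by
    simp only [hz]
    apply mul_ne_zero (mul_ne_zero _ Complex.I_ne_zero)
    · exact_mod_cast Complex.ofReal_ne_zero.mpr hlogpos.ne'
    · simp only [neg_ne_zero]
      exact_mod_cast Complex.ofReal_ne_zero.mpr hH.ne'
  have habsz : ‖z‖ = H * Real.log p := by
    simp only [hz, norm_mul, norm_neg, Complex.norm_I, Complex.norm_real, Real.norm_eq_abs,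
      abs_of_pos hH, abs_of_pos hlogpos]
    ring
  have hcpow : (p : ℂ) ^ (-(H : ℂ) * Complex.I) = Complex.exp z := by
    have hpne : (p : ℂ) ≠ 0 := by exact_mod_cast Nat.cast_ne_zero.mpr hp.pos.ne'
    rw [Complex.cpow_def_of_ne_zero hpne]
    congr 1
    rw [show ((p : ℕ) : ℂ) = (((p : ℕ) : ℝ) : ℂ) by push_cast; ring,
      ← Complex.ofReal_log (by positivity)]
    rw [hz]; ring
  have hexpr : ((p : ℂ) ^ (-(H : ℂ) * Complex.I) - 1) /
      (-Complex.I * (H : ℂ) * (Real.log p : ℂ)) - 1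
      = (Complex.exp z - 1 - z) / z := by
    rw [hcpow]
    have hden : -Complex.I * (H : ℂ) * (Real.log p : ℂ) = z := by rw [hz]; ring
    rw [hden]
    field_simp
  have hb := Complex.norm_exp_sub_one_sub_id_le (x := z) (by rw [habsz]; exact hle)
  rw [habsz] at hb
  rw [hexpr, norm_div, habsz,
    div_le_iff₀ (mul_pos hH hlogpos)]
  nlinarith [hb]

set_option maxHeartbeats 1000000 in
/-- For 0 < H ≤ 1 and x ≥ 2:
∑_{p < e^{1/H}} (1/p)|(p^{-iH}-1)/(-iH log p) - 1|² = O(1), and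
∑_{e^{1/H} ≤ p < x} 1/p = O(log⁺(H log x) + 1). -/
theorem stmt_18 :
    ∃ C : ℝ, 0 < C ∧ ∀ H x : ℝ, 0 < H → H ≤ 1 → 2 ≤ x →
      (∑ p ∈ (Finset.range ⌈Real.exp (1 / H)⌉₊).filter
            (fun p : ℕ => p.Prime ∧ (p : ℝ) < Real.exp (1 / H)),
          (1 / (p : ℝ)) *
            (‖
              (((p : ℂ) ^ (-(H : ℂ) * Complex.I) - 1) /
                  (-Complex.I * (H : ℂ) * (Real.log p : ℂ)) - 1)‖) ^ 2
        ≤ C) ∧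
      (∑ p ∈ (Finset.range ⌈x⌉₊).filter
            (fun p : ℕ => p.Prime ∧ Real.exp (1 / H) ≤ (p : ℝ) ∧ (p : ℝ) < x),
          (1 : ℝ) / p
        ≤ C * (max 0 (Real.log (H * Real.log x)) + 1)) := by
  refine ⟨100, by norm_num, fun H x hH0 hH1 hx => ?_⟩
  have hlog2 : (0 : ℝ) < Real.log 2 := Real.log_pos (by norm_num)
  have hlog2lt : Real.log 2 < 0.6931471808 := Real.log_two_lt_d9
  have hHinv : (1 : ℝ) ≤ 1 / H := by
    rw [le_div_iff₀ hH0]; linarith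
  constructor
  · -- Part 1
    set y := Real.exp (1 / H) with hy
    set K₁ := ⌈(1 / H) / Real.log 2⌉₊ with hK₁
    have hK₁ge : (1 / H) / Real.log 2 ≤ (K₁ : ℝ) := Nat.le_ceil _
    have hyle : y ≤ ((2 ^ K₁ : ℕ) : ℝ) := by
      have : ((2 ^ K₁ : ℕ) : ℝ) = Real.exp (K₁ * Real.log 2) := by
        rw [Real.exp_nat_mul, Real.exp_log (by norm_num)]
        push_cast; ring
      rw [this, hy]
      apply Real.exp_le_exp.mpr
      rw [div_le_iff₀ hlog2] at hK₁ge
      linarith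
    have hsub : (Finset.range ⌈y⌉₊).filter
        (fun p : ℕ => p.Prime ∧ (p : ℝ) < y) ⊆ Nat.primesBelow (2 ^ K₁) := by
      intro p hp
      rw [mem_filter] at hp
      rw [Nat.mem_primesBelow]
      refine ⟨?_, hp.2.1⟩
      have : (p : ℝ) < ((2 ^ K₁ : ℕ) : ℝ) := lt_of_lt_of_le hp.2.2 hyle
      exact_mod_cast this
    have hterm : ∀ p ∈ (Finset.range ⌈y⌉₊).filter
        (fun p : ℕ => p.Prime ∧ (p : ℝ) < y),
        (1 / (p : ℝ)) * (‖
          (((p : ℂ) ^ (-(H : ℂ) * Complex.I) - 1) /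
            (-Complex.I * (H : ℂ) * (Real.log p : ℂ)) - 1)‖) ^ 2
        ≤ H * (Real.log p / p) := by
      intro p hp
      rw [mem_filter] at hp
      obtain ⟨_, hpp, hplt⟩ := hp
      have hp2 : (2 : ℝ) ≤ p := by exact_mod_cast hpp.two_le
      have hlogpos : 0 < Real.log p := Real.log_pos (by linarith)
      have hloglt : Real.log p < 1 / H := by
        have := Real.log_lt_log (by linarith : (0:ℝ) < p) hplt
        rwa [hy, Real.log_exp] at this
      have hHle : H * Real.log p ≤ 1 := by
        rw [lt_div_iff₀ hH0] at hloglt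
        nlinarith
      have hb := term_bound hH0 hpp hHle
      have habs : (0 : ℝ) ≤ ‖ (((p : ℂ) ^ (-(H : ℂ) * Complex.I) - 1) /
          (-Complex.I * (H : ℂ) * (Real.log p : ℂ)) - 1)‖ := norm_nonneg _
      have hsq : (‖ (((p : ℂ) ^ (-(H : ℂ) * Complex.I) - 1) /
          (-Complex.I * (H : ℂ) * (Real.log p : ℂ)) - 1)‖) ^ 2 ≤ H * Real.log p := by
        nlinarith
      have hppos : (0 : ℝ) < p := by linarith
      calc (1 / (p : ℝ)) * (‖ (((p : ℂ) ^ (-(H : ℂ) * Complex.I) - 1) /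
            (-Complex.I * (H : ℂ) * (Real.log p : ℂ)) - 1)‖) ^ 2
          ≤ (1 / (p : ℝ)) * (H * Real.log p) := by
            apply mul_le_mul_of_nonneg_left hsq (by positivity)
        _ = H * (Real.log p / p) := by field_simp
    calc ∑ p ∈ (Finset.range ⌈y⌉₊).filter
          (fun p : ℕ => p.Prime ∧ (p : ℝ) < y),
          (1 / (p : ℝ)) * (‖
            (((p : ℂ) ^ (-(H : ℂ) * Complex.I) - 1) /
              (-Complex.I * (H : ℂ) * (Real.log p : ℂ)) - 1)‖) ^ 2
        ≤ ∑ p ∈ (Finset.range ⌈y⌉₊).filter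
            (fun p : ℕ => p.Prime ∧ (p : ℝ) < y), H * (Real.log p / p) :=
          Finset.sum_le_sum hterm
      _ ≤ ∑ p ∈ Nat.primesBelow (2 ^ K₁), H * (Real.log p / p) := by
          apply Finset.sum_le_sum_of_subset_of_nonneg hsub
          intro p hp _
          have h1 : (1 : ℝ) ≤ p := by
            exact_mod_cast (Nat.prime_of_mem_primesBelow hp).one_lt.le
          have := Real.log_nonneg h1
          positivity
      _ = H * ∑ p ∈ Nat.primesBelow (2 ^ K₁), Real.log p / p := by
          rw [Finset.mul_sum]
      _ ≤ 100 := by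
          have hs := sum_log_div_le K₁
          have hsnn : (0 : ℝ) ≤ ∑ p ∈ Nat.primesBelow (2 ^ K₁), Real.log p / p := by
            apply Finset.sum_nonneg
            intro p hp
            have h1 : (1 : ℝ) ≤ p := by
              exact_mod_cast (Nat.prime_of_mem_primesBelow hp).one_lt.le
            have := Real.log_nonneg h1
            positivity
          have hKub : (K₁ : ℝ) < (1 / H) / Real.log 2 + 1 :=
            Nat.ceil_lt_add_one (by positivity)
          have hKub' : (K₁ : ℝ) * (H * Real.log 2) ≤ 1 + H * Real.log 2 := by
            have heq : ((1 / H) / Real.log 2 + 1) * (H * Real.log 2)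
                = 1 + H * Real.log 2 := by field_simp
            nlinarith [mul_pos hH0 hlog2]
          have hlog4 : Real.log 4 = 2 * Real.log 2 := by
            rw [show (4 : ℝ) = 2 ^ 2 by norm_num, Real.log_pow]; push_cast; ring
          have hK₁nn : (0 : ℝ) ≤ (K₁ : ℝ) := Nat.cast_nonneg _
          have h1 : H * ∑ p ∈ Nat.primesBelow (2 ^ K₁), Real.log p / p
              ≤ H * (2 * Real.log 4 * K₁) := mul_le_mul_of_nonneg_left hs hH0.le
          have h2 : H * (2 * Real.log 4 * K₁) = 4 * ((K₁ : ℝ) * (H * Real.log 2)) := by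
            rw [hlog4]; ring
          have h3 : H * Real.log 2 ≤ 1 * Real.log 2 :=
            mul_le_mul_of_nonneg_right hH1 hlog2.le
          linarith
  · -- Part 2
    set k₀ := ⌊(1 / H) / Real.log 2⌋₊ with hk₀def
    set Kc := ⌈Real.log x / Real.log 2⌉₊ with hKcdef
    set K := max k₀ Kc with hKdef
    have hlogx : Real.log 2 ≤ Real.log x := Real.log_le_log (by norm_num) hx
    have hk₀1 : 1 ≤ k₀ := by
      apply Nat.le_floor
      rw [le_div_iff₀ hlog2]
      have : Real.log 2 ≤ 1 / H := by
        calc Real.log 2 ≤ 1 := by linarith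
          _ ≤ 1 / H := hHinv
      linarith
    have hKk₀ : k₀ ≤ K := le_max_left _ _
    have hk₀le : (k₀ : ℝ) ≤ (1 / H) / Real.log 2 := Nat.floor_le (by positivity)
    have hxle : x ≤ ((2 ^ (K + 1) : ℕ) : ℝ) := by
      have hKc : Real.log x / Real.log 2 ≤ (Kc : ℝ) := Nat.le_ceil _
      have hKcK : (Kc : ℝ) ≤ (K : ℝ) := by exact_mod_cast le_max_right k₀ Kc
      have h2K : ((2 ^ (K + 1) : ℕ) : ℝ) = Real.exp ((K + 1) * Real.log 2) := by
        rw [show ((K:ℝ) + 1) * Real.log 2 = ((K + 1 : ℕ) : ℝ) * Real.log 2 by push_cast; ring,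
          Real.exp_nat_mul, Real.exp_log (by norm_num)]
        push_cast; ring
      rw [h2K, show x = Real.exp (Real.log x) from (Real.exp_log (by linarith)).symm]
      apply Real.exp_le_exp.mpr
      rw [div_le_iff₀ hlog2] at hKc
      nlinarith [mul_le_mul_of_nonneg_right hKcK hlog2.le]
    have hexpk₀ : ((2 ^ k₀ : ℕ) : ℝ) ≤ Real.exp (1 / H) := by
      have : ((2 ^ k₀ : ℕ) : ℝ) = Real.exp (k₀ * Real.log 2) := by
        rw [Real.exp_nat_mul, Real.exp_log (by norm_num)]; push_cast; ring
      rw [this]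
      apply Real.exp_le_exp.mpr
      rw [le_div_iff₀ hlog2] at hk₀le
      linarith
    have hsub : (Finset.range ⌈x⌉₊).filter
        (fun p : ℕ => p.Prime ∧ Real.exp (1 / H) ≤ (p : ℝ) ∧ (p : ℝ) < x)
        ⊆ Nat.primesBelow (2 ^ (K + 1)) \ Nat.primesBelow (2 ^ k₀) := by
      intro p hp
      rw [mem_filter] at hp
      obtain ⟨_, hpp, hpe, hpx⟩ := hp
      rw [Finset.mem_sdiff, Nat.mem_primesBelow, Nat.mem_primesBelow]
      constructor
      · refine ⟨?_, hpp⟩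
        have : (p : ℝ) < ((2 ^ (K + 1) : ℕ) : ℝ) := lt_of_lt_of_le hpx hxle
        exact_mod_cast this
      · intro hcon
        have h1 : ((2 ^ k₀ : ℕ) : ℝ) ≤ (p : ℝ) := le_trans hexpk₀ hpe
        have h2 : (p : ℝ) < ((2 ^ k₀ : ℕ) : ℝ) := by exact_mod_cast hcon.1
        linarith
    have hmain : ∑ p ∈ (Finset.range ⌈x⌉₊).filter
        (fun p : ℕ => p.Prime ∧ Real.exp (1 / H) ≤ (p : ℝ) ∧ (p : ℝ) < x),
        (1 : ℝ) / p ≤ 4 + 4 * Real.log K - 4 * Real.log k₀ := by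
      calc ∑ p ∈ (Finset.range ⌈x⌉₊).filter
            (fun p : ℕ => p.Prime ∧ Real.exp (1 / H) ≤ (p : ℝ) ∧ (p : ℝ) < x),
            (1 : ℝ) / p
          ≤ ∑ p ∈ Nat.primesBelow (2 ^ (K + 1)) \ Nat.primesBelow (2 ^ k₀),
              (1 : ℝ) / p := by
            apply Finset.sum_le_sum_of_subset_of_nonneg hsub
            intro p _ _
            positivity
        _ ≤ 4 + 4 * Real.log K - 4 * Real.log k₀ := sum_recip_le k₀ hk₀1 K hKk₀
    -- Now bound 4 + 4 log K - 4 log k₀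
    set t := H * Real.log x with ht
    have htpos : 0 < t := by
      rw [ht]; exact mul_pos hH0 (lt_of_lt_of_le hlog2 hlogx)
    have hM : (K : ℝ) ≤ max 1 (7 * t) * k₀ := by
      have hk₀pos : (0 : ℝ) < (k₀ : ℝ) := by exact_mod_cast hk₀1
      have hM1 : (1 : ℝ) ≤ max 1 (7 * t) := le_max_left _ _
      rw [hKdef]
      push_cast [Nat.cast_max]
      apply max_le
      · nlinarith
      · -- (Kc : ℝ) ≤ 7 t k₀ ≤ M k₀
        have hKcub : (Kc : ℝ) < Real.log x / Real.log 2 + 1 :=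
          Nat.ceil_lt_add_one (div_nonneg (by linarith) hlog2.le)
        have hk₀lb : (1 / H) / Real.log 2 - 1 < (k₀ : ℝ) := Nat.sub_one_lt_floor _
        have h7 : (Kc : ℝ) ≤ 7 * t * k₀ := by
          -- Kc log2 < log x + log 2 ≤ 2 log x
          have hKc2 : (Kc : ℝ) * Real.log 2 < 2 * Real.log x := by
            rw [div_add' _ _ _ hlog2.ne'] at hKcub
            rw [lt_div_iff₀ hlog2] at hKcub
            linarith
          -- H log2 k₀ > 1 - H log2
          have hk₀2 : 1 - H * Real.log 2 < H * Real.log 2 * k₀ := by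
            have heq : ((1 / H) / Real.log 2 - 1) * (H * Real.log 2)
                = 1 - H * Real.log 2 := by field_simp
            nlinarith [mul_pos hH0 hlog2]
          -- so 7 H log2 k₀ ≥ 7 - 7 H log2 ≥ 7 - 7 log2 ≥ 2 + something
          have hHl2 : H * Real.log 2 ≤ Real.log 2 := by nlinarith
          have h2' : (2 : ℝ) ≤ 7 * H * Real.log 2 * k₀ := by nlinarith
          -- Kc log2 < 2 log x ≤ (7 H log2 k₀) log x = 7 t k₀ log2
          rw [ht]
          have hlogxpos : 0 < Real.log x := by linarith
          have : (Kc : ℝ) * Real.log 2 ≤ 7 * (H * Real.log x) * k₀ * Real.log 2 := by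
            nlinarith
          exact le_of_mul_le_mul_right (by linarith) hlog2
        calc (Kc : ℝ) ≤ 7 * t * k₀ := h7
          _ ≤ max 1 (7 * t) * k₀ := by
              apply mul_le_mul_of_nonneg_right (le_max_right _ _) hk₀pos.le
    have hKpos : (0 : ℝ) < (K : ℝ) := by
      have : (1 : ℕ) ≤ K := le_trans hk₀1 hKk₀
      exact_mod_cast this
    have hk₀pos : (0 : ℝ) < (k₀ : ℝ) := by exact_mod_cast hk₀1
    have hlogK : Real.log K ≤ Real.log (max 1 (7 * t)) + Real.log k₀ := by
      have := Real.log_le_log hKpos hM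
      rwa [Real.log_mul (by positivity : (max 1 (7*t) : ℝ) ≠ 0) hk₀pos.ne'] at this
    have hlogM : Real.log (max 1 (7 * t)) ≤ 6 + max 0 (Real.log t) := by
      rcases max_cases (1 : ℝ) (7 * t) with ⟨h1, _⟩ | ⟨h1, h2⟩
      · rw [h1, Real.log_one]
        have := le_max_left (0 : ℝ) (Real.log t)
        linarith
      · rw [h1, Real.log_mul (by norm_num) htpos.ne']
        have hlog7 : Real.log 7 ≤ 6 := by
          have := Real.log_le_sub_one_of_pos (by norm_num : (0:ℝ) < 7)
          linarith
        have := le_max_right (0 : ℝ) (Real.log t)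
        linarith
    have hlogk₀ : 0 ≤ Real.log k₀ := Real.log_nonneg (by exact_mod_cast hk₀1)
    have hmax0 : 0 ≤ max 0 (Real.log t) := le_max_left _ _
    calc ∑ p ∈ (Finset.range ⌈x⌉₊).filter
          (fun p : ℕ => p.Prime ∧ Real.exp (1 / H) ≤ (p : ℝ) ∧ (p : ℝ) < x),
          (1 : ℝ) / p
        ≤ 4 + 4 * Real.log K - 4 * Real.log k₀ := hmain
      _ ≤ 100 * (max 0 (Real.log (H * Real.log x)) + 1) := by
          rw [← ht]
          nlinarith [hlogK, hlogM]
end
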